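/- For m ≥ 3 and n = 2^m, the number of balanced codewords in the extended Hamming code RM(m-2, m) equals (1/n)·[C(n, n/2) + (n-1)·C(n/2, n/4)]. -/
import Mathlib


/-- Weight of a Boolean function: number of inputs mapped to 1. -/
def wtF {m : ℕ} (f : (Fin m → ZMod 2) → ZMod 2) : ℕ :=
  (Finset.univ.filter fun x => f x = 1).card

/-- The Reed–Muller code RM(r,m): the span of the monomial functions of degree ≤ r,
i.e. truth tables of Boolean functions in m variables of degree at most r. -/
def RM (r m : ℕ) : Submodule (ZMod 2) ((Fin m → ZMod 2) → ZMod 2) :=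
  Submodule.span (ZMod 2)
    {f | ∃ S : Finset (Fin m), S.card ≤ r ∧ f = fun x => ∏ i ∈ S, x i}


open Finset

abbrev V (m : ℕ) := Fin m → ZMod 2

def mono {m : ℕ} (T : Finset (Fin m)) : V m → ZMod 2 := fun x => ∏ i ∈ T, x i

lemma zmod2_cases (z : ZMod 2) : z = 0 ∨ z = 1 := by revert z; decide

lemma mono_mul {m : ℕ} (T U : Finset (Fin m)) (x : V m) :
    mono T x * mono U x = mono (T ∪ U) x := by
  by_cases h : ∃ i ∈ T ∩ U, x i = 0
  · obtain ⟨i, hi, hxi⟩ := h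
    rw [Finset.mem_inter] at hi
    rw [mono, mono, mono, Finset.prod_eq_zero hi.1 hxi,
      Finset.prod_eq_zero (Finset.mem_union_left U hi.1) hxi, zero_mul]
  · push_neg at h
    have h1 : ∏ i ∈ T ∩ U, x i = 1 := by
      apply Finset.prod_eq_one
      intro i hi
      rcases zmod2_cases (x i) with h0 | h0
      · exact absurd h0 (h i hi)
      · exact h0
    rw [mono, mono, mono, ← Finset.prod_union_inter (s₁ := T) (s₂ := U) (f := x), h1, mul_one]

lemma sum_mono {m : ℕ} (T : Finset (Fin m)) :
    ∑ x : V m, mono T x = if T = Finset.univ then 1 else 0 := by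
  have key : ∀ x : V m, mono T x = ∏ i : Fin m, (if i ∈ T then x i else 1) := by
    intro x
    rw [mono, Finset.prod_ite_mem, Finset.univ_inter]
  simp_rw [key]
  rw [← Fintype.prod_sum (fun i (j : ZMod 2) => if i ∈ T then j else 1)]
  have : ∀ i : Fin m, (∑ j : ZMod 2, (if i ∈ T then j else 1))
      = if i ∈ T then 1 else 0 := by
    intro i
    by_cases h : i ∈ T <;> simp [h] <;> decide
  simp_rw [this]
  by_cases h : T = Finset.univ
  · simp [h]
  · obtain ⟨i, hi⟩ : ∃ i, i ∉ T := by
      by_contra hc; push_neg at hc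
      exact h (Finset.eq_univ_of_forall hc)
    rw [if_neg h]
    exact Finset.prod_eq_zero (Finset.mem_univ i) (by simp [hi])

lemma ip_mono {m : ℕ} (T U : Finset (Fin m)) :
    ∑ x : V m, mono T x * mono U x = if T ∪ U = Finset.univ then 1 else 0 := by
  simp_rw [mono_mul]; exact sum_mono _

def delta {m : ℕ} (a : V m) : V m → ZMod 2 := fun x => ∏ i, (x i + a i + 1)

lemma delta_apply {m : ℕ} (a x : V m) : delta a x = if x = a then 1 else 0 := by
  rw [delta]
  by_cases h : x = a
  · rw [if_pos h]
    apply Finset.prod_eq_one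
    intro i _
    rw [h]
    rcases zmod2_cases (a i) with h0 | h0 <;> rw [h0] <;> decide
  · rw [if_neg h]
    obtain ⟨i, hi⟩ : ∃ i, x i ≠ a i := by
      by_contra hc; push_neg at hc; exact h (funext hc)
    refine Finset.prod_eq_zero (Finset.mem_univ i) ?_
    rcases zmod2_cases (x i) with h0 | h0 <;> rcases zmod2_cases (a i) with h1 | h1 <;>
      rw [h0, h1] <;> first | (exfalso; rw [h0, h1] at hi; exact hi rfl) | decide

lemma delta_mem_span {m : ℕ} (a : V m) :
    delta a ∈ Submodule.span (ZMod 2) (Set.range (mono (m := m))) := by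
  have hrepr : delta a = ∑ t : Finset (Fin m), (∏ i ∈ tᶜ, (a i + 1)) • mono t := by
    funext x
    have := Fintype.prod_add (fun i => x i) (fun i => a i + 1)
    simp only [delta]
    rw [show (fun i => x i + a i + 1) = fun i => x i + (a i + 1) by funext i; ring]
    rw [show ∏ i, (x i + (a i + 1)) = ∑ t : Finset (Fin m), (∏ i ∈ t, x i) * ∏ i ∈ tᶜ, (a i + 1)
      from this]
    rw [Finset.sum_apply]
    apply Finset.sum_congr rfl
    intro t _
    simp [mono, mul_comm]
  rw [hrepr]
  exact Submodule.sum_mem _ fun t _ =>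
    Submodule.smul_mem _ _ (Submodule.subset_span (Set.mem_range_self t))

lemma mem_span_mono {m : ℕ} (f : V m → ZMod 2) :
    f ∈ Submodule.span (ZMod 2) (Set.range (mono (m := m))) := by
  have hrepr : f = ∑ a : V m, f a • delta a := by
    funext x
    rw [Finset.sum_apply]
    simp_rw [Pi.smul_apply, delta_apply, smul_eq_mul, mul_ite, mul_one, mul_zero]
    rw [Finset.sum_ite_eq Finset.univ x f]
    simp
  rw [hrepr]
  exact Submodule.sum_mem _ fun a _ => Submodule.smul_mem _ _ (delta_mem_span a)

def D (m : ℕ) : Submodule (ZMod 2) (V m → ZMod 2) where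
  carrier := {f | (∑ x, f x) = 0 ∧ ∀ i, (∑ x, f x * x i) = 0}
  zero_mem' := by simp
  add_mem' := by
    rintro f g ⟨hf1, hf2⟩ ⟨hg1, hg2⟩
    constructor
    · simp only [Pi.add_apply]
      rw [Finset.sum_add_distrib, hf1, hg1, add_zero]
    · intro i
      simp only [Pi.add_apply, add_mul]
      rw [Finset.sum_add_distrib, hf2 i, hg2 i, add_zero]
  smul_mem' := by
    rintro c f ⟨hf1, hf2⟩
    constructor
    · simp only [Pi.smul_apply, smul_eq_mul]
      rw [← Finset.mul_sum, hf1, mul_zero]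
    · intro i
      simp only [Pi.smul_apply, smul_eq_mul, mul_assoc]
      rw [← Finset.mul_sum, hf2 i, mul_zero]

lemma union_singleton_eq_univ_iff {m : ℕ} (T : Finset (Fin m)) (i : Fin m) :
    T ∪ {i} = Finset.univ ↔ T = Finset.univ ∨ T = Finset.univ.erase i := by
  constructor
  · intro h
    by_cases hi : i ∈ T
    · left
      apply Finset.eq_univ_of_forall
      intro j
      have : j ∈ T ∪ {i} := h ▸ Finset.mem_univ j
      rcases Finset.mem_union.mp this with hj | hj
      · exact hj
      · rw [Finset.mem_singleton.mp hj]; exact hi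
    · right
      apply Finset.Subset.antisymm
      · intro j hj
        rw [Finset.mem_erase]
        exact ⟨fun hji => hi (hji ▸ hj), Finset.mem_univ j⟩
      · intro j hj
        rw [Finset.mem_erase] at hj
        have : j ∈ T ∪ {i} := h ▸ Finset.mem_univ j
        rcases Finset.mem_union.mp this with h' | h'
        · exact h'
        · exact absurd (Finset.mem_singleton.mp h') hj.1
  · rintro (rfl | rfl)
    · simp
    · apply Finset.eq_univ_of_forall
      intro j
      by_cases hj : j = i
      · exact Finset.mem_union_right _ (by simp [hj])
      · exact Finset.mem_union_left _ (Finset.mem_erase.mpr ⟨hj, Finset.mem_univ j⟩)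

lemma xi_eq_mono {m : ℕ} (i : Fin m) (x : V m) : x i = mono {i} x := by
  simp [mono]

lemma RM_mem_iff {m : ℕ} (hm : 3 ≤ m) (f : V m → ZMod 2) :
    f ∈ RM (m - 2) m ↔ f ∈ D m := by
  constructor
  · intro hf
    refine Submodule.span_le.mpr ?_ hf
    rintro g ⟨S, hS, rfl⟩
    have hcard : S.card < m := by
      have := hS
      omega
    constructor
    · have : (fun x : V m => ∏ i ∈ S, x i) = mono S := rfl
      rw [this]
      rw [show (∑ x : V m, mono S x) = if S = Finset.univ then 1 else 0 from sum_mono S]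
      rw [if_neg]
      intro h
      rw [h, Finset.card_univ, Fintype.card_fin] at hcard
      omega
    · intro i
      have h1 : ∀ x : V m, (∏ j ∈ S, x j) * x i = mono S x * mono {i} x := by
        intro x; rw [← xi_eq_mono]; rfl
      simp_rw [h1]
      rw [ip_mono, if_neg]
      intro h
      have : (S ∪ {i}).card ≤ S.card + 1 := by
        apply le_trans (Finset.card_union_le _ _)
        simp
      rw [h, Finset.card_univ, Fintype.card_fin] at this
      omega
  · rintro ⟨h1, h2⟩
    obtain ⟨c, hc⟩ := (Submodule.mem_span_range_iff_exists_fun (ZMod 2)).mp (mem_span_mono f)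
    -- c univ = 0
    have key : ∀ U : Finset (Fin m), (∑ x : V m, f x * mono U x)
        = ∑ T : Finset (Fin m), c T * (if T ∪ U = Finset.univ then 1 else 0) := by
      intro U
      rw [← hc]
      simp only [Finset.sum_apply, Pi.smul_apply, smul_eq_mul]
      simp_rw [Finset.sum_mul, mul_assoc]
      rw [Finset.sum_comm]
      apply Finset.sum_congr rfl
      intro T _
      rw [← Finset.mul_sum]
      congr 1
      exact ip_mono T U
    have hcuniv : c Finset.univ = 0 := by
      have e1 : (∑ x : V m, f x * mono ∅ x) = ∑ x : V m, f x := by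
        apply Finset.sum_congr rfl; intro x _; simp [mono]
      have := key ∅
      rw [e1, h1] at this
      simp only [Finset.union_empty, mul_ite, mul_one, mul_zero] at this
      rw [Finset.sum_ite_eq' Finset.univ Finset.univ c] at this
      simp at this
      exact this.symm
    have hcerase : ∀ i : Fin m, c (Finset.univ.erase i) = 0 := by
      intro i
      have e1 : (∑ x : V m, f x * mono {i} x) = ∑ x : V m, f x * x i := by
        apply Finset.sum_congr rfl; intro x _; rw [← xi_eq_mono]
      have hk := key {i}
      rw [e1, h2 i] at hk
      have hfil : (Finset.univ.filter (fun T : Finset (Fin m) => T ∪ {i} = Finset.univ))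
          = {Finset.univ, Finset.univ.erase i} := by
        ext T
        simp only [Finset.mem_filter, Finset.mem_univ, true_and, Finset.mem_insert,
          Finset.mem_singleton]
        exact union_singleton_eq_univ_iff T i
      have hne : (Finset.univ : Finset (Fin m)) ≠ Finset.univ.erase i := by
        intro h
        have := Finset.card_erase_of_mem (Finset.mem_univ i)
        rw [← h, Finset.card_univ, Fintype.card_fin] at this
        omega
      simp only [mul_ite, mul_one, mul_zero] at hk
      rw [← Finset.sum_filter, hfil, Finset.sum_pair hne, hcuniv, zero_add] at hk
      exact hk.symm
    -- now f is a combination of low-degree monomials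
    rw [← hc]
    have hsplit : (Finset.univ : Finset (Finset (Fin m)))
        = Finset.univ.filter (fun T => T.card ≤ m - 2) ∪
          Finset.univ.filter (fun T => ¬ T.card ≤ m - 2) := by
      rw [Finset.filter_union_filter_not_eq]
    rw [hsplit, Finset.sum_union (Finset.disjoint_filter_filter_not _ _ _)]
    have hzero : ∑ T ∈ Finset.univ.filter (fun T : Finset (Fin m) => ¬ T.card ≤ m - 2),
        c T • mono T = 0 := by
      apply Finset.sum_eq_zero
      intro T hT
      rw [Finset.mem_filter] at hT
      have hle : T.card ≤ m := by
        have := Finset.card_le_univ T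
        rwa [Fintype.card_fin] at this
      have : T.card = m ∨ T.card = m - 1 := by omega
      rcases this with hcard | hcard
      · have : T = Finset.univ := by
          apply Finset.eq_univ_of_card
          rw [hcard, Fintype.card_fin]
        rw [this, hcuniv, zero_smul]
      · have hdiff : (Finset.univ \ T).card = 1 := by
          rw [Finset.card_sdiff_of_subset (Finset.subset_univ T), Finset.card_univ, Fintype.card_fin,
            hcard]
          omega
        obtain ⟨i, hi⟩ := Finset.card_eq_one.mp hdiff
        have hT' : T = Finset.univ.erase i := by
          have := Finset.sdiff_sdiff_eq_self (Finset.subset_univ T)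
          rw [← this, hi, Finset.erase_eq]
        rw [hT', hcerase i, zero_smul]
    rw [hzero, add_zero]
    apply Submodule.sum_mem
    intro T hT
    rw [Finset.mem_filter] at hT
    apply Submodule.smul_mem
    apply Submodule.subset_span
    exact ⟨T, hT.2, rfl⟩

noncomputable section

def eps : ZMod 2 → ℚ := fun z => if z = 0 then 1 else -1

lemma eps_zero : eps 0 = 1 := rfl
lemma eps_one : eps 1 = -1 := rfl
lemma eps_add (a b : ZMod 2) : eps (a + b) = eps a * eps b := by
  rcases zmod2_cases a with rfl | rfl <;> rcases zmod2_cases b with rfl | rfl <;>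
    simp [eps] <;> norm_num <;> decide
lemma eps_add_one (a : ZMod 2) : eps (a + 1) = - eps a := by
  rw [eps_add, eps_one]; ring

lemma eps_sum {α : Type*} (s : Finset α) (h : α → ZMod 2) :
    eps (∑ x ∈ s, h x) = ∏ x ∈ s, eps (h x) := by
  induction s using Finset.cons_induction with
  | empty => simp [eps_zero]
  | cons a s ha ih => rw [Finset.sum_cons, Finset.prod_cons, eps_add, ih]

def ip {m : ℕ} (c x : V m) : ZMod 2 := ∑ i, c i * x i

lemma char_vanish {m : ℕ} (φ : V m → ZMod 2) (hadd : ∀ a b, φ (a + b) = φ a + φ b)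
    (x₀ : V m) (h1 : φ x₀ = 1) : ∑ x : V m, eps (φ x) = 0 := by
  have hre : ∑ x : V m, eps (φ x) = ∑ x : V m, eps (φ (x + x₀)) :=
    Fintype.sum_equiv (Equiv.addRight x₀).symm _ _ (fun x => by simp)
  have : ∑ x : V m, eps (φ (x + x₀)) = - ∑ x : V m, eps (φ x) := by
    rw [← Finset.sum_neg_distrib]
    apply Finset.sum_congr rfl
    intro x _
    rw [hadd, h1, eps_add_one]
  have h := hre.trans this
  linarith

lemma ip_add_left {m : ℕ} (c c' x : V m) : ip (c + c') x = ip c x + ip c' x := by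
  simp [ip, add_mul, Finset.sum_add_distrib]

lemma ip_add_right {m : ℕ} (c x y : V m) : ip c (x + y) = ip c x + ip c y := by
  simp [ip, mul_add, Finset.sum_add_distrib]

lemma exists_ip_one_right {m : ℕ} (c : V m) (hc : c ≠ 0) : ∃ x₀, ip c x₀ = 1 := by
  obtain ⟨i, hi⟩ : ∃ i, c i ≠ 0 := by
    by_contra h; push_neg at h; exact hc (funext h)
  have hci : c i = 1 := (zmod2_cases (c i)).resolve_left hi
  refine ⟨fun j => if j = i then 1 else 0, ?_⟩
  rw [ip]
  simp_rw [mul_ite, mul_one, mul_zero]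
  rw [Finset.sum_ite_eq' Finset.univ i c]
  simp [hci]

lemma exists_ip_one_left {m : ℕ} (v : V m) (hv : v ≠ 0) : ∃ c₀, ip c₀ v = 1 := by
  obtain ⟨i, hi⟩ : ∃ i, v i ≠ 0 := by
    by_contra h; push_neg at h; exact hv (funext h)
  have hvi : v i = 1 := (zmod2_cases (v i)).resolve_left hi
  refine ⟨fun j => if j = i then 1 else 0, ?_⟩
  rw [ip]
  simp_rw [ite_mul, one_mul, zero_mul]
  rw [Finset.sum_ite_eq' Finset.univ i v]
  simp [hvi]

lemma card_V (m : ℕ) : Fintype.card (V m) = 2 ^ m := by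
  simp [Fintype.card_fun]

lemma char_sum_v {m : ℕ} (v : V m) :
    ∑ c : V m, eps (ip c v) = if v = 0 then (2 ^ m : ℚ) else 0 := by
  by_cases hv : v = 0
  · rw [if_pos hv, hv]
    have : ∀ c : V m, ip c 0 = 0 := by intro c; simp [ip]
    simp_rw [this, eps_zero]
    rw [Finset.sum_const, Finset.card_univ, card_V]
    simp
  · rw [if_neg hv]
    obtain ⟨c₀, hc₀⟩ := exists_ip_one_left v hv
    exact char_vanish (fun c => ip c v) (fun a b => ip_add_left a b v) c₀ hc₀

lemma card_ip_one {m : ℕ} (hm : 1 ≤ m) (c : V m) (hc : c ≠ 0) :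
    (Finset.univ.filter fun x : V m => ip c x = 1).card = 2 ^ (m - 1) := by
  obtain ⟨x₀, hx₀⟩ := exists_ip_one_right c hc
  have hvan : ∑ x : V m, eps (ip c x) = 0 :=
    char_vanish (ip c) (ip_add_right c) x₀ hx₀
  set A := Finset.univ.filter fun x : V m => ip c x = 1 with hA
  set B := Finset.univ.filter fun x : V m => ¬ ip c x = 1 with hB
  have hsplit : ∑ x ∈ A, eps (ip c x) + ∑ x ∈ B, eps (ip c x) = 0 := by
    rw [hA, hB, Finset.sum_filter_add_sum_filter_not]; exact hvan
  have hAsum : ∑ x ∈ A, eps (ip c x) = -(A.card : ℚ) := by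
    have hval : ∀ x ∈ A, eps (ip c x) = -1 := by
      intro x hx
      rw [hA, Finset.mem_filter] at hx
      rw [hx.2, eps_one]
    rw [Finset.sum_congr rfl hval, Finset.sum_const]
    simp
  have hBsum : ∑ x ∈ B, eps (ip c x) = (B.card : ℚ) := by
    have hval : ∀ x ∈ B, eps (ip c x) = 1 := by
      intro x hx
      rw [hB, Finset.mem_filter] at hx
      have h0 : ip c x = 0 := (zmod2_cases (ip c x)).resolve_right hx.2
      rw [h0, eps_zero]
    rw [Finset.sum_congr rfl hval, Finset.sum_const]
    simp
  have hcards : A.card + B.card = 2 ^ m := by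
    rw [hA, hB, Finset.card_filter_add_card_filter_not, Finset.card_univ, card_V]
  have : (A.card : ℚ) = (B.card : ℚ) := by rw [hAsum, hBsum] at hsplit; linarith
  have hab : A.card = B.card := Nat.cast_injective this
  have h2 : 2 ^ m = 2 * 2 ^ (m - 1) := by
    rw [← pow_succ']
    congr 1
    omega
  omega

open Polynomial in
lemma coeff_prod_linear {α : Type*} [Fintype α] [DecidableEq α] (g : α → ℚ) (k : ℕ) :
    (∏ x : α, (Polynomial.C (g x) * Polynomial.X + 1)).coeff k
      = ∑ S ∈ Finset.powersetCard k (Finset.univ : Finset α), ∏ x ∈ S, g x := by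
  rw [Fintype.prod_add]
  have hterm : ∀ t : Finset α,
      (∏ x ∈ t, (Polynomial.C (g x) * Polynomial.X)) * ∏ _x ∈ tᶜ, (1 : ℚ[X])
        = Polynomial.C (∏ x ∈ t, g x) * Polynomial.X ^ t.card := by
    intro t
    rw [Finset.prod_const_one, mul_one, Finset.prod_mul_distrib, map_prod,
      Finset.prod_const]
  simp_rw [hterm]
  rw [Polynomial.finset_sum_coeff]
  simp_rw [Polynomial.coeff_C_mul, Polynomial.coeff_X_pow]
  rw [Finset.powersetCard_eq_filter, ← Finset.powerset_univ, Finset.sum_filter]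
  apply Finset.sum_congr rfl
  intro t _
  by_cases h : t.card = k
  · rw [if_pos h, if_pos h.symm, mul_one]
  · rw [if_neg h, if_neg (fun hh => h hh.symm), mul_zero]

open Polynomial in
lemma coeff_one_sub_sq (N j : ℕ) (hN : N = 2 * j) (hj : Even j) :
    ((1 - Polynomial.X ^ 2 : ℚ[X]) ^ N).coeff N = (N.choose j : ℚ) := by
  have hexp : (1 - Polynomial.X ^ 2 : ℚ[X]) ^ N
      = ∑ k ∈ Finset.range (N + 1),
          Polynomial.C ((-1) ^ k * (N.choose k : ℚ)) * Polynomial.X ^ (2 * k) := by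
    rw [sub_eq_add_neg, add_comm, add_pow]
    apply Finset.sum_congr rfl
    intro k _
    rw [one_pow, mul_one]
    rw [show ((-(Polynomial.X ^ 2) : ℚ[X])) ^ k = (-1) ^ k * Polynomial.X ^ (2 * k) by
      rw [neg_pow, ← pow_mul]]
    rw [map_mul, map_pow, map_neg, map_one, Polynomial.C_eq_natCast]
    ring
  rw [hexp, Polynomial.finset_sum_coeff]
  simp_rw [Polynomial.coeff_C_mul, Polynomial.coeff_X_pow]
  rw [Finset.sum_eq_single j]
  · rw [if_pos hN, mul_one, hj.neg_one_pow, one_mul]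
  · intro k _ hk
    rw [if_neg (by omega), mul_zero]
  · intro hmem
    exfalso
    apply hmem
    rw [Finset.mem_range]
    omega

open Polynomial in
lemma Tsum {m : ℕ} (hm : 3 ≤ m) (c : V m) (hc : c ≠ 0) :
    ∑ S ∈ Finset.powersetCard (2^(m-1)) (Finset.univ : Finset (V m)),
      ∏ x ∈ S, eps (ip c x) = ((2^(m-1)).choose (2^(m-2)) : ℚ) := by
  rw [← coeff_prod_linear (fun x => eps (ip c x)) (2^(m-1))]
  have hA := card_ip_one (by omega) c hc
  have hcards : (Finset.univ.filter fun x : V m => ip c x = 1).card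
      + (Finset.univ.filter fun x : V m => ¬ ip c x = 1).card = 2^m := by
    rw [Finset.card_filter_add_card_filter_not, Finset.card_univ, card_V]
  have h2 : (2:ℕ)^m = 2 * 2^(m-1) := by rw [← pow_succ']; congr 1; omega
  have hB : (Finset.univ.filter fun x : V m => ¬ ip c x = 1).card = 2^(m-1) := by omega
  have hsplit : (∏ x : V m, (Polynomial.C (eps (ip c x)) * Polynomial.X + 1))
      = (1 - Polynomial.X)^(2^(m-1)) * ((1 + Polynomial.X)^(2^(m-1)) : ℚ[X]) := by
    rw [← Finset.prod_filter_mul_prod_filter_not Finset.univ (fun x => ip c x = 1)]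
    congr 1
    · rw [Finset.prod_congr rfl (fun x hx => ?_), Finset.prod_const, hA]
      rw [Finset.mem_filter] at hx
      rw [hx.2, eps_one, map_neg, map_one]
      ring
    · rw [Finset.prod_congr rfl (fun x hx => ?_), Finset.prod_const, hB]
      rw [Finset.mem_filter] at hx
      have h0 : ip c x = 0 := (zmod2_cases (ip c x)).resolve_right hx.2
      rw [h0, eps_zero, map_one]
      ring
  rw [hsplit, ← mul_pow]
  rw [show ((1 - Polynomial.X) * (1 + Polynomial.X) : ℚ[X]) = 1 - Polynomial.X^2 by ring]
  refine coeff_one_sub_sq _ _ ?_ ?_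
  · rw [← pow_succ']; congr 1; omega
  · exact Nat.even_pow.mpr ⟨even_two, by omega⟩

lemma count_main {m : ℕ} (hm : 3 ≤ m) :
    (((Finset.powersetCard (2^(m-1)) (Finset.univ : Finset (V m))).filter
        (fun S => ∀ i, ∑ x ∈ S, x i = 0)).card : ℚ)
      = (1 / 2^m) * (((2^m).choose (2^(m-1)) : ℚ)
          + ((2^m : ℚ) - 1) * ((2^(m-1)).choose (2^(m-2)) : ℚ)) := by
  rw [Finset.card_filter]
  push_cast
  have hind : ∀ S : Finset (V m), ((if (∀ i, ∑ x ∈ S, x i = 0) then 1 else 0 : ℚ))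
      = (1/2^m) * ∑ c : V m, ∏ x ∈ S, eps (ip c x) := by
    intro S
    have hip : ∀ c : V m, ∏ x ∈ S, eps (ip c x) = eps (ip c (fun i => ∑ x ∈ S, x i)) := by
      intro c
      rw [← eps_sum S (fun x => ip c x)]
      congr 1
      simp_rw [ip, Finset.mul_sum]
      rw [Finset.sum_comm]
    rw [Finset.sum_congr rfl (fun c _ => hip c), char_sum_v]
    by_cases h : (fun i => ∑ x ∈ S, x i) = (0 : V m)
    · have hcond : ∀ i : Fin m, ∑ x ∈ S, x i = 0 := fun i => by simpa using congrFun h i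
      rw [if_pos h, if_pos hcond]
      field_simp
    · have hcond : ¬ ∀ i : Fin m, ∑ x ∈ S, x i = 0 := fun hall =>
        h (funext fun i => by simpa using hall i)
      rw [if_neg h, if_neg hcond, mul_zero]
  rw [Finset.sum_congr rfl (fun S _ => hind S), ← Finset.mul_sum, Finset.sum_comm]
  congr 1
  rw [← Finset.add_sum_erase _ _ (Finset.mem_univ (0 : V m))]
  have hT0 : ∑ S ∈ Finset.powersetCard (2^(m-1)) (Finset.univ : Finset (V m)),
      ∏ x ∈ S, eps (ip (0 : V m) x) = ((2^m).choose (2^(m-1)) : ℚ) := by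
    have : ∀ S ∈ Finset.powersetCard (2^(m-1)) (Finset.univ : Finset (V m)),
        (∏ x ∈ S, eps (ip (0 : V m) x)) = 1 := by
      intro S _
      apply Finset.prod_eq_one
      intro x _
      rw [show ip (0 : V m) x = 0 by simp [ip], eps_zero]
    rw [Finset.sum_congr rfl this, Finset.sum_const, Finset.card_powersetCard,
      Finset.card_univ, card_V]
    simp
  rw [hT0]
  congr 1
  have hconst : ∀ c ∈ Finset.univ.erase (0 : V m),
      (∑ S ∈ Finset.powersetCard (2^(m-1)) (Finset.univ : Finset (V m)),
        ∏ x ∈ S, eps (ip c x)) = ((2^(m-1)).choose (2^(m-2)) : ℚ) := by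
    intro c hcmem
    exact Tsum hm c (Finset.mem_erase.mp hcmem).1
  rw [Finset.sum_congr rfl hconst, Finset.sum_const, Finset.card_erase_of_mem
    (Finset.mem_univ _), Finset.card_univ, card_V]
  rw [nsmul_eq_mul]
  congr 1
  push_cast [show (1:ℕ) ≤ 2^m from Nat.one_le_two_pow]
  ring

def ind {m : ℕ} (S : Finset (V m)) : V m → ZMod 2 := fun x => if x ∈ S then 1 else 0

lemma ind_injective {m : ℕ} : Function.Injective (ind (m := m)) := by
  intro S S' h
  ext x
  have hx := congrFun h x
  simp only [ind] at hx
  constructor <;> intro hmem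
  · by_contra hmem'
    rw [if_pos hmem, if_neg hmem'] at hx
    exact one_ne_zero hx
  · by_contra hmem'
    rw [if_neg hmem', if_pos hmem] at hx
    exact one_ne_zero hx.symm

lemma wt_ind {m : ℕ} (S : Finset (V m)) : wtF (ind S) = S.card := by
  rw [wtF]
  congr 1
  ext x
  simp only [Finset.mem_filter, Finset.mem_univ, true_and, ind]
  by_cases h : x ∈ S <;> simp [h]

lemma sum_ind {m : ℕ} (S : Finset (V m)) (i : Fin m) :
    ∑ x : V m, ind S x * x i = ∑ x ∈ S, x i := by
  simp_rw [ind, ite_mul, one_mul, zero_mul]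
  rw [Finset.sum_ite_mem, Finset.univ_inter]

lemma sum_ind_tot {m : ℕ} (S : Finset (V m)) :
    ∑ x : V m, ind S x = (S.card : ZMod 2) := by
  simp_rw [ind]
  rw [Finset.sum_ite_mem, Finset.univ_inter, Finset.sum_const]
  simp

lemma eq_ind {m : ℕ} (f : V m → ZMod 2) :
    f = ind (Finset.univ.filter fun x => f x = 1) := by
  funext x
  simp only [ind, Finset.mem_filter, Finset.mem_univ, true_and]
  rcases zmod2_cases (f x) with h | h <;> simp [h]

lemma set_eq {m : ℕ} (hm : 3 ≤ m) :
    {f : V m → ZMod 2 | f ∈ RM (m - 2) m ∧ wtF f = 2 ^ (m - 1)} =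
      ind '' ((Finset.powersetCard (2^(m-1)) (Finset.univ : Finset (V m))).filter
        (fun S => ∀ i, ∑ x ∈ S, x i = 0) : Finset (Finset (V m))) := by
  ext f
  simp only [Set.mem_setOf_eq, Set.mem_image, Finset.mem_coe, Finset.mem_filter,
    Finset.mem_powersetCard_univ]
  constructor
  · rintro ⟨hRM, hwt⟩
    obtain ⟨h1, h2⟩ := (RM_mem_iff hm f).mp hRM
    refine ⟨Finset.univ.filter fun x => f x = 1, ⟨hwt, ?_⟩, (eq_ind f).symm⟩
    intro i
    rw [← sum_ind _ i, ← eq_ind f]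
    exact h2 i
  · rintro ⟨S, ⟨hcard, hsum⟩, rfl⟩
    constructor
    · apply (RM_mem_iff hm (ind S)).mpr
      constructor
      · rw [sum_ind_tot, hcard]
        push_cast
        rw [show (2 : ZMod 2) = 0 from rfl, zero_pow (by omega : m - 1 ≠ 0)]
      · intro i
        rw [sum_ind]
        exact hsum i
    · rw [wt_ind, hcard]

theorem extended_hamming_balanced_count (m : ℕ) (hm : 3 ≤ m) :
    (({f | f ∈ RM (m - 2) m ∧ wtF f = 2 ^ (m - 1)}.ncard : ℚ)) =
      (1 / (2 ^ m : ℚ)) *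
        ((Nat.choose (2 ^ m) (2 ^ m / 2) : ℚ) +
          ((2 ^ m : ℚ) - 1) * (Nat.choose (2 ^ m / 2) (2 ^ m / 4) : ℚ)) := by
  have hd2 : (2:ℕ)^m / 2 = 2^(m-1) := by
    have := Nat.pow_div (x := 2) (by omega : 1 ≤ m) (by norm_num)
    rwa [pow_one] at this
  have hd4 : (2:ℕ)^m / 4 = 2^(m-2) := by
    have := Nat.pow_div (x := 2) (by omega : 2 ≤ m) (by norm_num)
    rwa [show (2:ℕ)^2 = 4 from rfl] at this
  rw [hd2, hd4, set_eq hm, Set.ncard_image_of_injective _ ind_injective,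
    Set.ncard_coe_finset]
  exact count_main hm
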